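/- Let λ_1 > 0, θ ∈ (0, λ_1), K > 0 and suppose f : Ω̄ × R^- → (0,∞) satisfies f(x,z) ≤ K + (λ_1 - θ)|z|^k for all z ≤ 0. Let F(x,z) = ∫_z^0 w(x) f(x,τ) dτ with weight w(x) = |x|^{2sk}. If for all u in a class Φ one has λ_1 ∫_Ω w |u|^{k+1} dx ≤ ∫_Ω (-u) S_k(D²u) dx, then the functional J(u) = (1/(k+1))∫_Ω (-u)S_k(D²u)dx - ∫_Ω F(x,u)dx satisfies J(u) ≥ (θ_1/(k+1)) ∫_Ω (-u)S_k(D²u) dx - K_1|Ω| for constants θ_1 ∈ (0,1) and K_1 > 0 depending only on k, θ, λ_1, K and the weight. -/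

import Mathlib

open MeasureTheory Set intervalIntegral

/-- Coercivity of the Hessian functional in the sublinear case: if
`f(x,z) ≤ K + (λ₁-θ)|z|^k` for `z ≤ 0`, `F(x,z) = ∫_z^0 |x|^{2sk} f(x,τ)dτ`, and for all
`u` in the admissible class (represented by pairs `(u, G)` with `G = S_k(D²u) ≥ 0`,
`u ≤ 0`) the spectral inequality `λ₁ ∫_Ω |x|^{2sk}|u|^{k+1} ≤ ∫_Ω (-u)G` holds, then
`J(u) = (1/(k+1))∫_Ω(-u)G - ∫_Ω F(x,u) ≥ (θ₁/(k+1))∫_Ω(-u)G - K₁|Ω|` for constants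
`θ₁ ∈ (0,1)`, `K₁ > 0` depending only on `k, θ, λ₁, K` and the weight. -/
theorem stmt16 (n k : ℕ) (hk : 1 ≤ k) (s lam θ K : ℝ)
    (Ω : Set (EuclideanSpace ℝ (Fin n))) (hΩm : MeasurableSet Ω)
    (hΩb : Bornology.IsBounded Ω) (hΩpos : 0 < (volume Ω).toReal)
    (hlam : 0 < lam) (hθ : 0 < θ) (hθl : θ < lam) (hK : 0 < K)
    (hw : IntegrableOn (fun x : EuclideanSpace ℝ (Fin n) => ‖x‖ ^ (2 * s * (k : ℝ))) Ω)
    (f : EuclideanSpace ℝ (Fin n) → ℝ → ℝ)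
    (hfc : ∀ x, Continuous (f x))
    (hfpos : ∀ x z, z ≤ 0 → 0 < f x z)
    (hf : ∀ x z, z ≤ 0 → f x z ≤ K + (lam - θ) * |z| ^ k) :
    ∃ θ₁ K₁ : ℝ, 0 < θ₁ ∧ θ₁ < 1 ∧ 0 < K₁ ∧
      ∀ (u G : EuclideanSpace ℝ (Fin n) → ℝ),
      (∀ x ∈ Ω, u x ≤ 0) → (∀ x ∈ Ω, 0 ≤ G x) →
      IntegrableOn (fun x => ‖x‖ ^ (2 * s * (k : ℝ)) * |u x| ^ (k + 1)) Ω →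
      IntegrableOn (fun x => ‖x‖ ^ (2 * s * (k : ℝ)) * |u x|) Ω →
      IntegrableOn (fun x => (-u x) * G x) Ω →
      IntegrableOn (fun x => ∫ τ in (u x)..0, ‖x‖ ^ (2 * s * (k : ℝ)) * f x τ) Ω →
      lam * (∫ x in Ω, ‖x‖ ^ (2 * s * (k : ℝ)) * |u x| ^ (k + 1))
        ≤ ∫ x in Ω, (-u x) * G x →
      (θ₁ / ((k : ℝ) + 1)) * (∫ x in Ω, (-u x) * G x) - K₁ * (volume Ω).toReal
        ≤ (1 / ((k : ℝ) + 1)) * (∫ x in Ω, (-u x) * G x)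
          - ∫ x in Ω, (∫ τ in (u x)..0, ‖x‖ ^ (2 * s * (k : ℝ)) * f x τ) := by
  have hk1 : (0:ℝ) < (k:ℝ) + 1 := by positivity
  set w : EuclideanSpace ℝ (Fin n) → ℝ := fun x => ‖x‖ ^ (2 * s * (k : ℝ)) with hw_def
  have hw0 : ∀ x, 0 ≤ w x := fun x => Real.rpow_nonneg (norm_nonneg x) _
  set ε : ℝ := θ / (2 * K * ((k:ℝ)+1)) with hε_def
  have hε : 0 < ε := by positivity
  set Cε : ℝ := 1 + 1/ε with hCε_def
  have hCε : 0 < Cε := by positivity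
  set W : ℝ := ∫ x in Ω, w x with hW_def
  have hW0 : 0 ≤ W := setIntegral_nonneg hΩm (fun x _ => hw0 x)
  set V : ℝ := (volume Ω).toReal with hV_def
  have hV : 0 < V := hΩpos
  clear_value ε Cε W V
  refine ⟨θ / (2 * lam), K * Cε * W / V + 1, by positivity, ?_, ?_, ?_⟩
  · rw [div_lt_one (by positivity)]; linarith
  · have h0 : 0 ≤ K * Cε * W / V :=
      div_nonneg (mul_nonneg (mul_nonneg hK.le hCε.le) hW0) hV.le
    linarith
  intro u G hu hG hA hB hI hF hspec
  set A : ℝ := ∫ x in Ω, w x * |u x| ^ (k+1) with hA_def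
  set B : ℝ := ∫ x in Ω, w x * |u x| with hB_def
  set I : ℝ := ∫ x in Ω, (-u x) * G x with hI_def
  have hA0 : 0 ≤ A := setIntegral_nonneg hΩm (fun x _ => by positivity)
  -- pointwise elementary inequality
  have hpt : ∀ t : ℝ, 0 ≤ t → t ≤ ε * t ^ (k+1) + Cε := by
    intro t ht
    rcases le_or_gt t Cε with h | h
    · have h0 : 0 ≤ ε * t ^ (k+1) := by positivity
      linarith
    · have hinv : 0 < 1/ε := by positivity
      have h1 : (1:ℝ) ≤ t := by
        have : (1:ℝ) ≤ Cε := by rw [hCε_def]; linarith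
        linarith
      have h2 : t ^ 2 ≤ t ^ (k+1) := pow_le_pow_right₀ h1 (by omega)
      have h3 : 1/ε ≤ t := by rw [hCε_def] at h; linarith
      have h4 : 1 ≤ ε * t := by
        have := mul_le_mul_of_nonneg_left h3 hε.le
        rw [mul_one_div, div_self (ne_of_gt hε)] at this
        exact this
      have h5 : t ≤ ε * t ^ 2 := by nlinarith
      nlinarith [mul_le_mul_of_nonneg_left h2 hε.le]
  -- step 1 : pointwise bound on the inner integral
  have key : ∀ x ∈ Ω, (∫ τ in (u x)..0, w x * f x τ)
      ≤ K * (w x * |u x|) + ((lam-θ)/((k:ℝ)+1)) * (w x * |u x|^(k+1)) := by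
    intro x hx
    have hux : u x ≤ 0 := hu x hx
    have habs : |u x| = -(u x) := abs_of_nonpos hux
    have hcont : Continuous (fun τ => w x * f x τ) := continuous_const.mul (hfc x)
    have hcont2 : Continuous (fun τ : ℝ => w x * (K + (lam-θ) * (-τ)^k)) :=
      continuous_const.mul (continuous_const.add (continuous_const.mul (continuous_neg.pow k)))
    have hmono : (∫ τ in (u x)..0, w x * f x τ)
        ≤ ∫ τ in (u x)..0, w x * (K + (lam-θ)*(-τ)^k) := by
      apply intervalIntegral.integral_mono_on hux (hcont.intervalIntegrable _ _)
        (hcont2.intervalIntegrable _ _)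
      intro τ hτ
      have hτ0 : τ ≤ 0 := hτ.2
      have hb := hf x τ hτ0
      rw [abs_of_nonpos hτ0] at hb
      exact mul_le_mul_of_nonneg_left hb (hw0 x)
    have hnegpow : (∫ τ in (u x)..0, (-τ)^k) = (-(u x))^(k+1)/((k:ℝ)+1) := by
      rw [intervalIntegral.integral_comp_neg (fun τ => τ^k), neg_zero, integral_pow,
        zero_pow (by omega : k + 1 ≠ 0)]
      push_cast
      ring
    have hcomp : (∫ τ in (u x)..0, w x * (K + (lam-θ)*(-τ)^k))
        = K * (w x * |u x|) + ((lam-θ)/((k:ℝ)+1)) * (w x * |u x|^(k+1)) := by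
      rw [intervalIntegral.integral_const_mul,
        intervalIntegral.integral_add intervalIntegrable_const
          (by exact (continuous_const.mul (continuous_neg.pow k)).intervalIntegrable _ _ :
            IntervalIntegrable (fun τ : ℝ => (lam-θ)*(-τ)^k) volume (u x) 0),
        intervalIntegral.integral_const_mul, hnegpow, intervalIntegral.integral_const,
        habs]
      simp only [smul_eq_mul]
      ring
    rw [hcomp] at hmono
    exact hmono
  -- step 2 : integrate
  have hFF : (∫ x in Ω, (∫ τ in (u x)..0, w x * f x τ))
      ≤ K * B + ((lam-θ)/((k:ℝ)+1)) * A := by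
    have h1 : (∫ x in Ω, (∫ τ in (u x)..0, w x * f x τ))
        ≤ ∫ x in Ω, (K * (w x * |u x|) + ((lam-θ)/((k:ℝ)+1)) * (w x * |u x|^(k+1))) :=
      setIntegral_mono_on hF ((hB.const_mul K).add (hA.const_mul _)) hΩm key
    rw [integral_add (hB.const_mul K) (hA.const_mul _), MeasureTheory.integral_const_mul,
      MeasureTheory.integral_const_mul] at h1
    simp only [hA_def, hB_def, hW_def, hw_def] at h1 ⊢
    exact h1
  -- step 3 : bound B
  have hR : IntegrableOn (fun x => ε * (w x * |u x|^(k+1)) + Cε * w x) Ω :=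
    (hA.const_mul ε).add (hw.const_mul Cε)
  have hBb : B ≤ ε * A + Cε * W := by
    have h1 : B ≤ ∫ x in Ω, (ε * (w x * |u x|^(k+1)) + Cε * w x) := by
      refine setIntegral_mono_on hB hR hΩm ?_
      intro x _
      have h := mul_le_mul_of_nonneg_left (hpt |u x| (abs_nonneg _)) (hw0 x)
      nlinarith [h]
    rw [integral_add (hA.const_mul ε) (hw.const_mul Cε), MeasureTheory.integral_const_mul,
      MeasureTheory.integral_const_mul] at h1
    simp only [hA_def, hB_def, hW_def, hw_def] at h1 ⊢
    exact h1
  -- step 4 : arithmetic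
  have hKe : K * ε = θ / (2*((k:ℝ)+1)) := by
    rw [hε_def]; field_simp
  have h5 : K * B ≤ θ/(2*((k:ℝ)+1)) * A + K * Cε * W := by
    have h6 : K * (ε * A + Cε * W) = θ/(2*((k:ℝ)+1)) * A + K * Cε * W := by
      linear_combination A * hKe
    have h7 := mul_le_mul_of_nonneg_left hBb hK.le
    linarith [h7, h6]
  have hc0 : 0 ≤ (lam - θ/2)/lam := by
    apply div_nonneg _ hlam.le; linarith
  have hAI : (lam - θ/2) * A ≤ (lam - θ/2)/lam * I := by
    have h := mul_le_mul_of_nonneg_left hspec hc0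
    calc (lam - θ/2) * A = (lam - θ/2)/lam * (lam * A) := by
          field_simp
      _ ≤ (lam - θ/2)/lam * I := h
  have hii : (lam - θ/2)/((k:ℝ)+1) * A ≤ 1/((k:ℝ)+1) * ((lam - θ/2)/lam * I) := by
    have h := mul_le_mul_of_nonneg_left hAI (by positivity : (0:ℝ) ≤ 1/((k:ℝ)+1))
    calc (lam - θ/2)/((k:ℝ)+1) * A = 1/((k:ℝ)+1) * ((lam - θ/2) * A) := by ring
      _ ≤ 1/((k:ℝ)+1) * ((lam - θ/2)/lam * I) := h
  have hK1V : (K * Cε * W / V + 1) * V = K * Cε * W + V := by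
    field_simp
  have hcoef : (θ/(2*lam)) / ((k:ℝ)+1) * I
      = 1/((k:ℝ)+1) * I - 1/((k:ℝ)+1) * ((lam - θ/2)/lam * I) := by
    have hne1 : lam ≠ 0 := ne_of_gt hlam
    have hne2 : ((k:ℝ)+1) ≠ 0 := ne_of_gt hk1
    have hc : (θ/(2*lam)) / ((k:ℝ)+1)
        = 1/((k:ℝ)+1) - 1/((k:ℝ)+1) * ((lam - θ/2)/lam) := by
      field_simp
      ring
    linear_combination I * hc
  have h8 : θ/(2*((k:ℝ)+1)) * A + ((lam-θ)/((k:ℝ)+1)) * A = (lam - θ/2)/((k:ℝ)+1) * A := by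
    have hne2 : ((k:ℝ)+1) ≠ 0 := ne_of_gt hk1
    have hc : θ/(2*((k:ℝ)+1)) + (lam-θ)/((k:ℝ)+1) = (lam - θ/2)/((k:ℝ)+1) := by
      field_simp
      ring
    linear_combination A * hc
  linarith [hFF, h5, h8, hii, hK1V, hcoef, hV]
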